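/- Define erfc(x) = (2/√π) ∫_x^∞ exp(−t²) dt for x ∈ ℝ. For every r > 0, η > 0 and κ ≥ 0, ∫_η^∞ exp(−s²r² − κ²/(4s²)) ds = (√π/(4r)) · [ exp(κr) · erfc(ηr + κ/(2η)) + exp(−κr) · erfc(ηr − κ/(2η)) ]. -/

import Mathlib

open scoped Real
open Real MeasureTheory Set Filter Topology

noncomputable section

/-- The complementary error function `erfc(x) = (2/√π) ∫_x^∞ exp(−t²) dt`. -/
def erfc (x : ℝ) : ℝ := 2 / Real.sqrt π * ∫ t in Set.Ioi x, Real.exp (-t ^ 2)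

noncomputable def Phi (u : ℝ) : ℝ := ∫ t in Set.Ioi u, Real.exp (-t ^ 2)

lemma gauss_int : MeasureTheory.Integrable (fun t : ℝ => Real.exp (-t ^ 2)) := by
  have := integrable_exp_neg_mul_sq (b := 1) one_pos
  simpa using this

lemma Phi_split {c x : ℝ} (h : c ≤ x) :
    Phi c = (∫ t in c..x, Real.exp (-t ^ 2)) + Phi x := by
  rw [intervalIntegral.integral_of_le h, Phi, Phi, ← Ioc_union_Ioi_eq_Ioi h,
    MeasureTheory.setIntegral_union (Ioc_disjoint_Ioi le_rfl) measurableSet_Ioi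
      gauss_int.integrableOn gauss_int.integrableOn]

lemma Phi_hasDerivAt (u : ℝ) : HasDerivAt Phi (-Real.exp (-u ^ 2)) u := by
  have key : ∀ x ∈ Set.Ioi (u - 1), Phi x = Phi (u - 1) - ∫ t in (u-1)..x, Real.exp (-t ^ 2) := by
    intro x hx
    rw [Phi_split (le_of_lt hx)]; ring
  have hD : HasDerivAt (fun x => Phi (u - 1) - ∫ t in (u-1)..x, Real.exp (-t ^ 2))
      (-Real.exp (-u ^ 2)) u := by
    have hc : Continuous fun t : ℝ => Real.exp (-t ^ 2) := by fun_prop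
    have h1 : HasDerivAt (fun x => ∫ t in (u-1)..x, Real.exp (-t ^ 2)) (Real.exp (-u ^ 2)) u := by
      refine intervalIntegral.integral_hasDerivAt_right
        gauss_int.intervalIntegrable ?_ hc.continuousAt
      exact hc.stronglyMeasurableAtFilter _ _
    simpa using (h1.const_sub (Phi (u-1)))
  refine hD.congr_of_eventuallyEq ?_
  filter_upwards [Ioi_mem_nhds (by linarith : u - 1 < u)] with x hx
  rw [key x hx]

lemma Phi_tendsto : Tendsto Phi atTop (𝓝 0) := by
  have h := MeasureTheory.intervalIntegral_tendsto_integral_Ioi 0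
    gauss_int.integrableOn (tendsto_id (α := ℝ))
  have : Tendsto (fun x : ℝ => Phi 0 - ∫ t in (0:ℝ)..x, Real.exp (-t ^ 2)) atTop
      (𝓝 (Phi 0 - Phi 0)) := tendsto_const_nhds.sub h
  rw [sub_self] at this
  refine this.congr' ?_
  filter_upwards [Filter.eventually_ge_atTop (0:ℝ)] with x hx
  rw [Phi_split hx]; ring

lemma gp_hasDerivAt (r κ x : ℝ) (hx : x ≠ 0) :
    HasDerivAt (fun s : ℝ => s * r + κ / (2 * s)) (r - κ / (2 * x ^ 2)) x := by
  have h1 : HasDerivAt (fun s : ℝ => s * r) (1 * r) x := (hasDerivAt_id x).mul_const r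
  have h2 : HasDerivAt (fun s : ℝ => 2 * s) 2 x := by
    simpa using (hasDerivAt_id x).const_mul 2
  have h3 : HasDerivAt (fun s : ℝ => κ / (2 * s)) ((0 * (2 * x) - κ * 2) / (2 * x) ^ 2) x :=
    (hasDerivAt_const x κ).div h2 (mul_ne_zero two_ne_zero hx)
  have := h1.add h3
  refine this.congr_deriv ?_
  field_simp
  ring

lemma gm_hasDerivAt (r κ x : ℝ) (hx : x ≠ 0) :
    HasDerivAt (fun s : ℝ => s * r - κ / (2 * s)) (r + κ / (2 * x ^ 2)) x := by
  have h1 : HasDerivAt (fun s : ℝ => s * r) (1 * r) x := (hasDerivAt_id x).mul_const r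
  have h2 : HasDerivAt (fun s : ℝ => 2 * s) 2 x := by
    simpa using (hasDerivAt_id x).const_mul 2
  have h3 : HasDerivAt (fun s : ℝ => κ / (2 * s)) ((0 * (2 * x) - κ * 2) / (2 * x) ^ 2) x :=
    (hasDerivAt_const x κ).div h2 (mul_ne_zero two_ne_zero hx)
  have := h1.sub h3
  refine this.congr_deriv ?_
  field_simp
  ring

lemma ewald_aux (r η κ : ℝ) (hr : 0 < r) (hη : 0 < η) (hκ : 0 ≤ κ) :
    ∫ s in Set.Ioi η, Real.exp (-(s ^ 2 * r ^ 2) - κ ^ 2 / (4 * s ^ 2)) =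
      1 / (2 * r) * (Real.exp (κ * r) * Phi (η * r + κ / (2 * η)) +
        Real.exp (-(κ * r)) * Phi (η * r - κ / (2 * η))) := by
  set E : ℝ → ℝ := fun s => Real.exp (-(s ^ 2 * r ^ 2) - κ ^ 2 / (4 * s ^ 2)) with hE
  set F : ℝ → ℝ := fun s => -(1 / (2 * r)) *
    (Real.exp (κ * r) * Phi (s * r + κ / (2 * s)) +
      Real.exp (-(κ * r)) * Phi (s * r - κ / (2 * s))) with hF
  have hderivF : ∀ x : ℝ, 0 < x → HasDerivAt F (E x) x := by
    intro x hx0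
    have hp : HasDerivAt (fun s : ℝ => Phi (s * r + κ / (2 * s)))
        (-Real.exp (-(x * r + κ / (2 * x)) ^ 2) * (r - κ / (2 * x ^ 2))) x := by
      simpa [Function.comp_def] using
        (Phi_hasDerivAt (x * r + κ / (2 * x))).comp x (gp_hasDerivAt r κ x hx0.ne')
    have hm : HasDerivAt (fun s : ℝ => Phi (s * r - κ / (2 * s)))
        (-Real.exp (-(x * r - κ / (2 * x)) ^ 2) * (r + κ / (2 * x ^ 2))) x := by
      simpa [Function.comp_def] using
        (Phi_hasDerivAt (x * r - κ / (2 * x))).comp x (gm_hasDerivAt r κ x hx0.ne')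
    have hD := ((hp.const_mul (Real.exp (κ * r))).add
      (hm.const_mul (Real.exp (-(κ * r))))).const_mul (-(1 / (2 * r)))
    refine hD.congr_deriv ?_
    have e1 : Real.exp (-(x * r + κ / (2 * x)) ^ 2) = Real.exp (-(κ * r)) * E x := by
      rw [hE, ← Real.exp_add]
      congr 1
      field_simp
      ring
    have e2 : Real.exp (-(x * r - κ / (2 * x)) ^ 2) = Real.exp (κ * r) * E x := by
      rw [hE, ← Real.exp_add]
      congr 1
      field_simp
      ring
    rw [e1, e2, Real.exp_neg]
    have h1 : Real.exp (κ * r) ≠ 0 := (Real.exp_pos _).ne'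
    have h2 : x ^ 2 ≠ 0 := pow_ne_zero 2 hx0.ne'
    field_simp
    ring
  have hEint : IntegrableOn E (Set.Ioi η) := by
    have hg : Integrable (fun s : ℝ => Real.exp (-(r ^ 2) * s ^ 2)) :=
      integrable_exp_neg_mul_sq (by positivity)
    apply MeasureTheory.Integrable.mono' hg.integrableOn
    · apply Measurable.aestronglyMeasurable
      measurability
    · filter_upwards [ae_restrict_mem measurableSet_Ioi] with s hs
      have hs0 : (0:ℝ) < s := lt_trans hη hs
      simp only [hE]
      rw [Real.norm_eq_abs, abs_of_pos (Real.exp_pos _)]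
      apply Real.exp_le_exp.2
      have : 0 ≤ κ ^ 2 / (4 * s ^ 2) := by positivity
      nlinarith
  have hFtends : Tendsto F atTop (𝓝 0) := by
    have hgp : Tendsto (fun s : ℝ => s * r + κ / (2 * s)) atTop atTop := by
      refine tendsto_atTop_add_right_of_le' _ (0:ℝ) (tendsto_id.atTop_mul_const hr) ?_
      filter_upwards [eventually_gt_atTop (0:ℝ)] with s hs
      positivity
    have hgm : Tendsto (fun s : ℝ => s * r - κ / (2 * s)) atTop atTop := by
      simp only [sub_eq_add_neg]
      refine tendsto_atTop_add_right_of_le' _ (-(κ/2)) (tendsto_id.atTop_mul_const hr) ?_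
      filter_upwards [eventually_ge_atTop (1:ℝ)] with s hs
      have h2s : (0:ℝ) < 2 * s := by linarith
      have h : κ / (2 * s) ≤ κ / 2 :=
        div_le_div_of_nonneg_left hκ two_pos (by linarith)
      linarith
    have h1 := Phi_tendsto.comp hgp
    have h2 := Phi_tendsto.comp hgm
    have := (((h1.const_mul (Real.exp (κ * r))).add
      (h2.const_mul (Real.exp (-(κ * r))))).const_mul (-(1 / (2 * r))))
    simpa [Function.comp_def, hF, sub_eq_add_neg] using this
  have := MeasureTheory.integral_Ioi_of_hasDerivAt_of_tendsto
    (f := F) (f' := E) (a := η) (m := 0)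
    (hderivF η hη).continuousAt.continuousWithinAt
    (fun x hx => hderivF x (lt_trans hη hx)) hEint hFtends
  rw [hE] at this
  rw [this, hF]
  ring

/-- **Real-space Ewald term of the periodic Yukawa Green's function**: for `r > 0`,
`η > 0` and `κ ≥ 0`,
`∫_η^∞ exp(−s²r² − κ²/(4s²)) ds
  = (√π/(4r)) [e^{κr} erfc(ηr + κ/(2η)) + e^{−κr} erfc(ηr − κ/(2η))]`. -/
theorem ewald_real_space_term (r η κ : ℝ) (hr : 0 < r) (hη : 0 < η) (hκ : 0 ≤ κ) :
    ∫ s in Set.Ioi η, Real.exp (-(s ^ 2 * r ^ 2) - κ ^ 2 / (4 * s ^ 2)) =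
      Real.sqrt π / (4 * r) *
        (Real.exp (κ * r) * erfc (η * r + κ / (2 * η)) +
          Real.exp (-(κ * r)) * erfc (η * r - κ / (2 * η))) := by
  have h := ewald_aux r η κ hr hη hκ
  have hπ : Real.sqrt π ≠ 0 := ne_of_gt (Real.sqrt_pos.mpr Real.pi_pos)
  rw [h]
  simp only [erfc, Phi]
  field_simp
  ring
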